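/- The direct limit of the system ℤ² → ℤ² → ⋯ with each map given by the matrix [[4,1],[1,4]] does not split as a direct sum ℤ[1/5] ⊕ ℤ[1/3]; more precisely, every injective group homomorphism ι : ℤ[1/5] → lim→(ℤ², σ) sends 1 to a 5-eigenvector (c,c) in some stage, and the resulting short exact sequence 0 → ℤ[1/5] → lim→(ℤ², σ) → ℤ[1/3] → 0 does not split. -/

import Mathlib

noncomputable section

/-- The subgroup `ℤ[1/p] ⊆ ℚ` of fractions with denominator a power of `p`. -/
def zOneDiv (p : ℕ) : AddSubgroup ℚ :=
  AddSubgroup.closure {q : ℚ | ∃ n : ℕ, q = 1 / (p : ℚ) ^ n}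

/-- The matrix `[[4,1],[1,4]]` as an endomorphism of `ℤ²`. -/
def sigma : Module.End ℤ (Fin 2 → ℤ) := Matrix.toLin' !![4, 1; 1, 4]

/-- The constant directed system `ℤ² → ℤ² → ⋯` with transition map `σ`. -/
def fSys : ∀ i j : ℕ, i ≤ j → (Fin 2 → ℤ) →ₗ[ℤ] (Fin 2 → ℤ) :=
  fun i j _ => sigma ^ (j - i)

/-- The direct limit `lim→(ℤ², σ)`. -/
def L : Type := Module.DirectLimit (fun _ : ℕ => Fin 2 → ℤ) fSys

instance : AddCommGroup L := Module.DirectLimit.addCommGroup _ fSys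

/-- The class in the direct limit of a vector at stage `k`. -/
def ofL (k : ℕ) (v : Fin 2 → ℤ) : L :=
  Module.DirectLimit.of ℤ ℕ (fun _ : ℕ => Fin 2 → ℤ) fSys k v

/-- `1 ∈ ℤ[1/5]`. -/
def one5 : ↥(zOneDiv 5) := ⟨1, AddSubgroup.subset_closure ⟨0, by norm_num⟩⟩

-- ### auxiliary lemmas

lemma sigma_apply (v : Fin 2 → ℤ) : sigma v = ![4 * v 0 + v 1, v 0 + 4 * v 1] := by
  funext i
  fin_cases i <;>
    simp [sigma, Matrix.toLin'_apply, Matrix.mulVec, dotProduct,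
      Fin.sum_univ_two]

lemma sum_pow (m : ℕ) (v : Fin 2 → ℤ) :
    ((sigma ^ m) v) 0 + ((sigma ^ m) v) 1 = 5 ^ m * (v 0 + v 1) := by
  induction m with
  | zero => simp
  | succ n ih =>
    rw [pow_succ', Module.End.mul_apply, sigma_apply ((sigma ^ n) v)]
    simp only [Matrix.cons_val_zero, Matrix.cons_val_one, Matrix.head_cons]
    linear_combination (5 : ℤ) * ih

lemma diff_pow (m : ℕ) (v : Fin 2 → ℤ) :
    ((sigma ^ m) v) 0 - ((sigma ^ m) v) 1 = 3 ^ m * (v 0 - v 1) := by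
  induction m with
  | zero => simp
  | succ n ih =>
    rw [pow_succ', Module.End.mul_apply, sigma_apply ((sigma ^ n) v)]
    simp only [Matrix.cons_val_zero, Matrix.cons_val_one, Matrix.head_cons]
    linear_combination (3 : ℤ) * ih

/-- The row functional `v ↦ a·v₀ + b·v₁` into `ℚ`. -/
def row (a b : ℤ) : (Fin 2 → ℤ) →ₗ[ℤ] ℚ where
  toFun v := ((a * v 0 + b * v 1 : ℤ) : ℚ)
  map_add' x y := by simp [Pi.add_apply]; push_cast; ring
  map_smul' c x := by simp [Pi.smul_apply]; push_cast; ring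

def phi5 : L →ₗ[ℤ] ℚ :=
  Module.DirectLimit.lift ℤ ℕ (fun _ : ℕ => Fin 2 → ℤ) fSys
    (fun i => (((5 : ℚ) ^ i)⁻¹) • row 1 1)
    (by
      intro i j hij x
      simp only [LinearMap.smul_apply, row, LinearMap.coe_mk, AddHom.coe_mk, fSys]
      have h := sum_pow (j - i) x
      have h5 : (5 : ℚ) ^ j = 5 ^ (j - i) * 5 ^ i := by
        rw [← pow_add]; congr 1; omega
      have hx : ((1 : ℤ) * ((sigma ^ (j - i)) x) 0 + 1 * ((sigma ^ (j - i)) x) 1 : ℤ)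
          = 5 ^ (j - i) * (1 * x 0 + 1 * x 1) := by linear_combination h
      rw [hx]
      push_cast
      rw [h5]
      field_simp
      simp only [smul_eq_mul]
      field_simp)

def phi3 : L →ₗ[ℤ] ℚ :=
  Module.DirectLimit.lift ℤ ℕ (fun _ : ℕ => Fin 2 → ℤ) fSys
    (fun i => (((3 : ℚ) ^ i)⁻¹) • row 1 (-1))
    (by
      intro i j hij x
      simp only [LinearMap.smul_apply, row, LinearMap.coe_mk, AddHom.coe_mk, fSys]
      have h := diff_pow (j - i) x
      have h3 : (3 : ℚ) ^ j = 3 ^ (j - i) * 3 ^ i := by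
        rw [← pow_add]; congr 1; omega
      have hx : ((1 : ℤ) * ((sigma ^ (j - i)) x) 0 + (-1) * ((sigma ^ (j - i)) x) 1 : ℤ)
          = 3 ^ (j - i) * (1 * x 0 + (-1) * x 1) := by linear_combination h
      rw [hx]
      push_cast
      rw [h3]
      field_simp
      simp only [smul_eq_mul]
      field_simp)

lemma phi5_ofL (k : ℕ) (v : Fin 2 → ℤ) :
    phi5 (ofL k v) = ((v 0 + v 1 : ℤ) : ℚ) / 5 ^ k := by
  show Module.DirectLimit.lift ℤ ℕ _ fSys _ _
      (Module.DirectLimit.of ℤ ℕ (fun _ : ℕ => Fin 2 → ℤ) fSys k v) = _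
  rw [Module.DirectLimit.lift_of]
  simp [row]
  push_cast
  ring

lemma phi3_ofL (k : ℕ) (v : Fin 2 → ℤ) :
    phi3 (ofL k v) = ((v 0 - v 1 : ℤ) : ℚ) / 3 ^ k := by
  show Module.DirectLimit.lift ℤ ℕ _ fSys _ _
      (Module.DirectLimit.of ℤ ℕ (fun _ : ℕ => Fin 2 → ℤ) fSys k v) = _
  rw [Module.DirectLimit.lift_of]
  simp [row]
  push_cast
  ring


lemma exists_rep (x : L) : ∃ k v, ofL k v = x :=
  Module.DirectLimit.exists_of x

/-- Every element of `ℤ[1/p]` has the form `a / p^M`. -/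
lemma mem_zOneDiv (p : ℕ) (hp : (p : ℚ) ≠ 0) {q : ℚ} (hq : q ∈ zOneDiv p) :
    ∃ (a : ℤ) (M : ℕ), q = a / (p : ℚ) ^ M := by
  let K : AddSubgroup ℚ :=
    { carrier := {q : ℚ | ∃ (a : ℤ) (M : ℕ), q = a / (p : ℚ) ^ M}
      zero_mem' := ⟨0, 0, by norm_num⟩
      add_mem' := by
        rintro x y ⟨a, M, rfl⟩ ⟨b, N, rfl⟩
        refine ⟨a * (p : ℤ) ^ N + b * (p : ℤ) ^ M, M + N, ?_⟩
        push_cast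
        rw [div_add_div _ _ (pow_ne_zero M hp) (pow_ne_zero N hp), pow_add]
        ring
      neg_mem' := by
        rintro x ⟨a, M, rfl⟩
        exact ⟨-a, M, by push_cast; ring⟩ }
  have hKle : zOneDiv p ≤ K := by
    apply AddSubgroup.closure_le K |>.2
    rintro r ⟨n, rfl⟩
    exact ⟨1, n, by push_cast; ring⟩
  exact hKle hq

/-- If `x` is divisible by every power of 5, it is the class of a 5-eigenvector. -/
lemma div5 (x : L) (h : ∀ n : ℕ, ∃ y : L, (5 ^ n : ℕ) • y = x) :
    ∃ (k : ℕ) (c : ℤ), x = ofL k (fun _ => c) := by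
  obtain ⟨k, v, rfl⟩ := exists_rep x
  have hd : v 0 - v 1 = 0 := by
    by_contra hne
    set m : ℕ := (v 0 - v 1).natAbs with hm
    obtain ⟨y, hy⟩ := h m
    obtain ⟨j, w, rfl⟩ := exists_rep y
    have h1 : phi3 (ofL k v) = (5 ^ m : ℕ) • phi3 (ofL j w) := by
      rw [← hy, map_nsmul]
    rw [phi3_ofL, phi3_ofL, nsmul_eq_mul] at h1
    push_cast at h1
    have h2 : ((v 0 : ℚ) - v 1) * 3 ^ j = 5 ^ m * ((w 0 : ℚ) - w 1) * 3 ^ k := by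
      have h3k : (3 : ℚ) ^ k ≠ 0 := by positivity
      have h3j : (3 : ℚ) ^ j ≠ 0 := by positivity
      field_simp at h1
      linear_combination h1
    have h2i : (v 0 - v 1) * 3 ^ j = 5 ^ m * (w 0 - w 1) * 3 ^ k := by
      exact_mod_cast h2
    have h3 : (5 : ℤ) ^ m ∣ (v 0 - v 1) * 3 ^ j := ⟨(w 0 - w 1) * 3 ^ k, by linarith [h2i]⟩
    have h4 : IsCoprime ((5 : ℤ) ^ m) ((3 : ℤ) ^ j) := by
      apply IsCoprime.pow
      rw [Int.isCoprime_iff_gcd_eq_one]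
      decide
    have h5 : (5 : ℤ) ^ m ∣ (v 0 - v 1) := h4.dvd_of_dvd_mul_right h3
    have h6 : (5 : ℤ) ^ m ≤ |v 0 - v 1| := Int.le_of_dvd (abs_pos.2 hne) ((dvd_abs _ _).2 h5)
    have h7 : |v 0 - v 1| < (5 : ℤ) ^ m := by
      have := Nat.lt_pow_self (n := m) (by norm_num : 1 < 5)
      rw [hm] at this ⊢
      rw [Int.abs_eq_natAbs]
      exact_mod_cast this
    linarith
  refine ⟨k, v 0, ?_⟩
  congr 1
  funext i
  fin_cases i
  · rfl
  · show v 1 = v 0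
    omega

/-- If `x` is divisible by every power of 3, its 5-eigencoordinate vanishes. -/
lemma div3 (x : L) (h : ∀ n : ℕ, ∃ y : L, (3 ^ n : ℕ) • y = x) : phi5 x = 0 := by
  obtain ⟨k, v, rfl⟩ := exists_rep x
  have hd : v 0 + v 1 = 0 := by
    by_contra hne
    set m : ℕ := (v 0 + v 1).natAbs with hm
    obtain ⟨y, hy⟩ := h m
    obtain ⟨j, w, rfl⟩ := exists_rep y
    have h1 : phi5 (ofL k v) = (3 ^ m : ℕ) • phi5 (ofL j w) := by
      rw [← hy, map_nsmul]
    rw [phi5_ofL, phi5_ofL, nsmul_eq_mul] at h1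
    push_cast at h1
    have h2 : ((v 0 : ℚ) + v 1) * 5 ^ j = 3 ^ m * ((w 0 : ℚ) + w 1) * 5 ^ k := by
      have h5k : (5 : ℚ) ^ k ≠ 0 := by positivity
      have h5j : (5 : ℚ) ^ j ≠ 0 := by positivity
      field_simp at h1
      linear_combination h1
    have h2i : (v 0 + v 1) * 5 ^ j = 3 ^ m * (w 0 + w 1) * 5 ^ k := by
      exact_mod_cast h2
    have h3 : (3 : ℤ) ^ m ∣ (v 0 + v 1) * 5 ^ j := ⟨(w 0 + w 1) * 5 ^ k, by linarith [h2i]⟩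
    have h4 : IsCoprime ((3 : ℤ) ^ m) ((5 : ℤ) ^ j) := by
      apply IsCoprime.pow
      rw [Int.isCoprime_iff_gcd_eq_one]
      decide
    have h5 : (3 : ℤ) ^ m ∣ (v 0 + v 1) := h4.dvd_of_dvd_mul_right h3
    have h6 : (3 : ℤ) ^ m ≤ |v 0 + v 1| := Int.le_of_dvd (abs_pos.2 hne) ((dvd_abs _ _).2 h5)
    have h7 : |v 0 + v 1| < (3 : ℤ) ^ m := by
      have := Nat.lt_pow_self (n := m) (by norm_num : 1 < 3)
      rw [hm] at this ⊢
      rw [Int.abs_eq_natAbs]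
      exact_mod_cast this
    linarith
  rw [phi5_ofL, hd]
  simp

theorem stmt0 :
    (∀ ι : ↥(zOneDiv 5) →+ L, Function.Injective ι →
      ∃ (k : ℕ) (c : ℤ), ι one5 = ofL k (fun _ => c)) ∧
    (∀ (ι : ↥(zOneDiv 5) →+ L) (π : L →+ ↥(zOneDiv 3)),
      Function.Injective ι → Function.Surjective π → π.ker = ι.range →
      ¬ ∃ s : ↥(zOneDiv 3) →+ L, π.comp s = AddMonoidHom.id ↥(zOneDiv 3)) := by
  have hdiv5 : ∀ (ι : ↥(zOneDiv 5) →+ L) (n : ℕ),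
      ∃ y : L, (5 ^ n : ℕ) • y = ι one5 := by
    intro ι n
    refine ⟨ι ⟨1 / (5 : ℚ) ^ n, AddSubgroup.subset_closure ⟨n, by norm_num⟩⟩, ?_⟩
    rw [← map_nsmul]
    congr 1
    apply Subtype.ext
    show ((((5 ^ n : ℕ) • (⟨1 / (5 : ℚ) ^ n, _⟩ : ↥(zOneDiv 5))) : ↥(zOneDiv 5)) : ℚ)
      = ((one5 : ↥(zOneDiv 5)) : ℚ)
    push_cast [one5]
    field_simp
    rw [nsmul_eq_mul]; push_cast; field_simp
  have part1 : ∀ ι : ↥(zOneDiv 5) →+ L, ∃ (k : ℕ) (c : ℤ), ι one5 = ofL k (fun _ => c) :=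
    fun ι => div5 _ (hdiv5 ι)
  refine ⟨fun ι _ => part1 ι, ?_⟩
  rintro ι π hinj hsurj hker ⟨s, hs⟩
  obtain ⟨k, c, hic⟩ := part1 ι
  set one3 : ↥(zOneDiv 3) := ⟨1, AddSubgroup.subset_closure ⟨0, by norm_num⟩⟩ with hone3
  -- the section's value at 1 is infinitely 3-divisible, hence has zero 5-eigencoordinate
  have hg5 : phi5 (s one3) = 0 := by
    apply div3
    intro n
    refine ⟨s ⟨1 / (3 : ℚ) ^ n, AddSubgroup.subset_closure ⟨n, by norm_num⟩⟩, ?_⟩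
    rw [← map_nsmul]
    congr 1
    apply Subtype.ext
    show ((((3 ^ n : ℕ) • (⟨1 / (3 : ℚ) ^ n, _⟩ : ↥(zOneDiv 3))) : ↥(zOneDiv 3)) : ℚ)
      = ((one3 : ↥(zOneDiv 3)) : ℚ)
    push_cast [hone3]
    field_simp
    rw [nsmul_eq_mul]; push_cast; field_simp
  set e : L := ofL 0 ![1, 0] with he
  set t : ↥(zOneDiv 3) := π e with ht
  have hst : π (s t) = t := DFunLike.congr_fun hs t
  have hmem : e - s t ∈ π.ker := by
    rw [AddMonoidHom.mem_ker, map_sub, hst, sub_self]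
  rw [hker] at hmem
  obtain ⟨u, hu⟩ := hmem
  obtain ⟨a, M, hq⟩ := mem_zOneDiv 5 (by norm_num) u.2
  obtain ⟨b, N, hb⟩ := mem_zOneDiv 3 (by norm_num) t.2
  -- phi5 of ι u
  have hu1 : (5 ^ M : ℕ) • u = a • one5 := by
    apply Subtype.ext
    push_cast [one5, hq]
    field_simp
    rw [nsmul_eq_mul, zsmul_eq_mul]; push_cast; field_simp
  have hphiu : (5 : ℚ) ^ M * phi5 (ι u) = a * ((c : ℚ) + c) / 5 ^ k := by
    have e1 : phi5 (ι ((5 ^ M : ℕ) • u)) = (5 : ℚ) ^ M * phi5 (ι u) := by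
      rw [map_nsmul, map_nsmul, nsmul_eq_mul]
      push_cast
      ring
    have e2 : phi5 (ι (a • one5)) = a * ((c : ℚ) + c) / 5 ^ k := by
      rw [map_zsmul, map_zsmul, hic, phi5_ofL, zsmul_eq_mul]
      push_cast
      ring
    rw [← e1, hu1, e2]
  -- phi5 of s t
  have ht1 : (3 ^ N : ℕ) • t = b • one3 := by
    apply Subtype.ext
    push_cast [hone3, hb]
    field_simp
    rw [nsmul_eq_mul, zsmul_eq_mul]; push_cast; field_simp
  have hphit : phi5 (s t) = 0 := by
    have e1 : phi5 (s ((3 ^ N : ℕ) • t)) = (3 : ℚ) ^ N * phi5 (s t) := by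
      rw [map_nsmul, map_nsmul, nsmul_eq_mul]
      push_cast
      ring
    have e2 : phi5 (s (b • one3)) = 0 := by
      rw [map_zsmul, map_zsmul, hg5, smul_zero]
    have e3 : (3 : ℚ) ^ N * phi5 (s t) = 0 := by rw [← e1, ht1, e2]
    have h3N : (3 : ℚ) ^ N ≠ 0 := by positivity
    exact (mul_eq_zero.1 e3).resolve_left h3N
  -- phi5 of e
  have hphie : phi5 e = 1 := by
    rw [he, phi5_ofL]
    norm_num
  have hiu : phi5 (ι u) = 1 := by
    rw [hu, map_sub, hphie, hphit, sub_zero]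
  rw [hiu, mul_one] at hphiu
  -- now (5:ℚ)^M * 5^k = 2 * (a*c), contradiction mod 2
  have hkey : (5 : ℚ) ^ (M + k) = 2 * ((a : ℚ) * c) := by
    have h5k : (5 : ℚ) ^ k ≠ 0 := by positivity
    rw [pow_add]
    field_simp at hphiu
    linear_combination hphiu
  have hkeyi : (5 : ℤ) ^ (M + k) = 2 * (a * c) := by exact_mod_cast hkey
  have h2 : (2 : ℤ) ∣ 5 ^ (M + k) := ⟨a * c, hkeyi⟩
  have := Int.Prime.dvd_pow' (by norm_num) h2
  norm_num at this
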